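/- If a bipartite multigraph-free graph G with parts X, Y (|X| = |Y| = q) contains a cycle of length 2t₀ for some 2 ≤ t₀ ≤ t, then the corresponding code C = {(a,b) : ab ∈ E(G)} ⊆ X × Y admits two disjoint sub-codes C₁, C₂, each of size t₀ ≤ t, with desc(C₁) = desc(C₂); hence C is not a t-MIPPC. -/
import Mathlib


/-- The descendant code of a sub-code of a code of length 2, viewed as a set of pairs. -/
def desc2 {q : ℕ} (C' : Finset (Fin q × Fin q)) : Set (Fin q × Fin q) :=
  {x | (∃ c ∈ C', c.1 = x.1) ∧ (∃ c ∈ C', c.2 = x.2)}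

/-- `C` is a `t`-MIPPC of length 2: for every descendant set produced by some nonempty
sub-code of size at most `t`, all such parent sets have a common codeword. -/
def isMIPPC2 {q : ℕ} (t : ℕ) (C : Finset (Fin q × Fin q)) : Prop :=
  ∀ S : Set (Fin q × Fin q),
    (∃ C' : Finset (Fin q × Fin q), C' ⊆ C ∧ C'.Nonempty ∧ C'.card ≤ t ∧ desc2 C' = S) →
    ∃ c, ∀ C' : Finset (Fin q × Fin q),
      C' ⊆ C → C'.Nonempty → C'.card ≤ t → desc2 C' = S → c ∈ C'

/-- `A¹_a = {b : (a,b) ∈ C}`. -/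
def A1 {q : ℕ} (C : Finset (Fin q × Fin q)) (a : Fin q) : Finset (Fin q) :=
  (C.filter (fun c => c.1 = a)).image Prod.snd

/-- Condition (I). -/
def CondI {q : ℕ} (C : Finset (Fin q × Fin q)) : Prop :=
  ∀ a₁ a₂ : Fin q, a₁ ≠ a₂ → (A1 C a₁ ∩ A1 C a₂).card ≤ 1

/-- Condition (II). -/
def CondII {q : ℕ} (C : Finset (Fin q × Fin q)) : Prop :=
  ¬ ∃ a₁ a₂ a₃ b₁ b₂ b₃ : Fin q,
      a₁ ≠ a₂ ∧ a₁ ≠ a₃ ∧ a₂ ≠ a₃ ∧ b₁ ≠ b₂ ∧ b₁ ≠ b₃ ∧ b₂ ≠ b₃ ∧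
      b₁ ∈ A1 C a₁ ∧ b₂ ∈ A1 C a₁ ∧ b₂ ∈ A1 C a₂ ∧ b₃ ∈ A1 C a₂ ∧
      b₁ ∈ A1 C a₃ ∧ b₃ ∈ A1 C a₃

/-- If the bipartite graph associated with a length-2 code contains a `2t₀`-cycle with
`2 ≤ t₀ ≤ t`, then the code has two disjoint sub-codes of size `t₀` with the same
descendant code; hence it is not a `t`-MIPPC. -/
theorem not_mippc_of_cycle {q t t₀ : ℕ} (C : Finset (Fin q × Fin q))
    (h2 : 2 ≤ t₀) (htt : t₀ ≤ t) (a b : ℕ → Fin q)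
    (ha : ∀ i j, i < t₀ → j < t₀ → a i = a j → i = j)
    (hb : ∀ i j, i < t₀ → j < t₀ → b i = b j → i = j)
    (he₁ : ∀ i, i < t₀ → (a i, b i) ∈ C)
    (he₂ : ∀ i, i < t₀ → (a ((i + 1) % t₀), b i) ∈ C) :
    (∃ C₁ C₂ : Finset (Fin q × Fin q),
      C₁ ⊆ C ∧ C₂ ⊆ C ∧ C₁.card = t₀ ∧ C₂.card = t₀ ∧ Disjoint C₁ C₂ ∧
      desc2 C₁ = desc2 C₂) ∧
    ¬ isMIPPC2 t C := by
  have ht0 : 0 < t₀ := by omega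
  obtain ⟨C₁, hC₁⟩ : ∃ S, S = (Finset.range t₀).image (fun i => (a i, b i)) := ⟨_, rfl⟩
  obtain ⟨C₂, hC₂⟩ : ∃ S, S = (Finset.range t₀).image (fun i => (a ((i+1) % t₀), b i)) := ⟨_, rfl⟩
  have hmem1 : ∀ x, x ∈ C₁ ↔ ∃ i < t₀, (a i, b i) = x := by
    intro x; rw [hC₁]; simp [Finset.mem_image]
  have hmem2 : ∀ x, x ∈ C₂ ↔ ∃ i < t₀, (a ((i+1) % t₀), b i) = x := by
    intro x; rw [hC₂]; simp [Finset.mem_image]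
  have hs1 : C₁ ⊆ C := by
    intro x hx; rw [hmem1] at hx; obtain ⟨i, hi, rfl⟩ := hx; exact he₁ i hi
  have hs2 : C₂ ⊆ C := by
    intro x hx; rw [hmem2] at hx; obtain ⟨i, hi, rfl⟩ := hx; exact he₂ i hi
  have hc1 : C₁.card = t₀ := by
    rw [hC₁, Finset.card_image_of_injOn, Finset.card_range]
    intro i hi j hj hij
    simp only [Finset.coe_range, Set.mem_Iio] at hi hj
    exact hb i j hi hj (congrArg Prod.snd hij)
  have hc2 : C₂.card = t₀ := by
    rw [hC₂, Finset.card_image_of_injOn, Finset.card_range]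
    intro i hi j hj hij
    simp only [Finset.coe_range, Set.mem_Iio] at hi hj
    exact hb i j hi hj (congrArg Prod.snd hij)
  have hdisj : Disjoint C₁ C₂ := by
    rw [Finset.disjoint_left]
    intro x hx1 hx2
    rw [hmem1] at hx1; rw [hmem2] at hx2
    obtain ⟨i, hi, rfl⟩ := hx1
    obtain ⟨j, hj, hjx⟩ := hx2
    have hji : j = i := hb j i hj hi (congrArg Prod.snd hjx)
    subst hji
    have : (j+1) % t₀ = j := ha _ _ (Nat.mod_lt _ ht0) hj (congrArg Prod.fst hjx)
    rcases Nat.lt_or_ge (j+1) t₀ with h | h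
    · rw [Nat.mod_eq_of_lt h] at this; omega
    · have h0 : (j+1) % t₀ = 0 := by rw [show j+1 = t₀ by omega]; exact Nat.mod_self t₀
      omega
  have hsucc : ∀ x, (∃ i < t₀, a ((i+1) % t₀) = x) ↔ ∃ i < t₀, a i = x := by
    intro x
    constructor
    · rintro ⟨i, hi, rfl⟩; exact ⟨(i+1) % t₀, Nat.mod_lt _ ht0, rfl⟩
    · rintro ⟨j, hj, rfl⟩
      rcases Nat.eq_zero_or_pos j with rfl | hjp
      · exact ⟨t₀ - 1, by omega, by congr 1; rw [Nat.sub_add_cancel ht0, Nat.mod_self]⟩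
      · exact ⟨j - 1, by omega, by congr 1; rw [Nat.sub_add_cancel hjp, Nat.mod_eq_of_lt hj]⟩
  have hdesc : desc2 C₁ = desc2 C₂ := by
    ext x
    simp only [desc2, Set.mem_setOf_eq]
    constructor <;> rintro ⟨⟨c, hc, hcx⟩, ⟨d, hd, hdx⟩⟩
    · rw [hmem1] at hc hd
      obtain ⟨i, hi, rfl⟩ := hc; obtain ⟨j, hj, rfl⟩ := hd
      obtain ⟨i', hi', hi'x⟩ := (hsucc x.1).mpr ⟨i, hi, hcx⟩
      exact ⟨⟨_, (hmem2 _).mpr ⟨i', hi', rfl⟩, hi'x⟩, ⟨_, (hmem2 _).mpr ⟨j, hj, rfl⟩, hdx⟩⟩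
    · rw [hmem2] at hc hd
      obtain ⟨i, hi, rfl⟩ := hc; obtain ⟨j, hj, rfl⟩ := hd
      obtain ⟨i', hi', hi'x⟩ := (hsucc x.1).mp ⟨i, hi, hcx⟩
      exact ⟨⟨_, (hmem1 _).mpr ⟨i', hi', rfl⟩, hi'x⟩, ⟨_, (hmem1 _).mpr ⟨j, hj, rfl⟩, hdx⟩⟩
  have hne1 : C₁.Nonempty := by rw [← Finset.card_pos, hc1]; omega
  have hne2 : C₂.Nonempty := by rw [← Finset.card_pos, hc2]; omega
  refine ⟨⟨C₁, C₂, hs1, hs2, hc1, hc2, hdisj, hdesc⟩, ?_⟩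
  intro hm
  obtain ⟨c, hc⟩ := hm (desc2 C₁) ⟨C₁, hs1, hne1, hc1 ▸ htt, rfl⟩
  have h1 := hc C₁ hs1 hne1 (hc1 ▸ htt) rfl
  have h2 := hc C₂ hs2 hne2 (hc2 ▸ htt) hdesc.symm
  exact Finset.disjoint_left.mp hdisj h1 h2
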